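/- Let U(R^e) denote the set of units of the ring R^e. Then U(R^e) ∩ R = C_m, where C_m = {c ∈ R : Kdim(R/cR) < m}. -/

import Mathlib

set_option linter.unusedVariables false

/-- `devLE k A` : the deviation (in the Gabriel–Rentschler sense) of the
poset `A` is `≤ k` (for `k : ℕ`).  `devLE 0 A` says every descending chain
eventually stabilizes (DCC), and `devLE (k+1) A` says that in any descending
chain all but finitely many of the factor intervals have deviation `≤ k`. -/
def devLE : ℕ → (A : Type*) → [inst : Preorder A] → Prop
  | 0, A, _ => ∀ f : ℕ → A, Antitone f → ∃ N, ∀ i, N ≤ i → f (i + 1) = f i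
  | (k+1), A, _ => ∀ f : ℕ → A, Antitone f →
      ∃ N, ∀ i, N ≤ i → devLE k (Set.Icc (f (i + 1)) (f i))

/-- The Gabriel–Rentschler Krull dimension of the right `R`-module `M`
(a module over `Rᵐᵒᵖ`) is `≤ k` : the deviation of its submodule lattice is `≤ k`. -/
def kdimLE (R M : Type*) [Ring R] [AddCommGroup M] [Module Rᵐᵒᵖ M] (k : ℕ) : Prop :=
  devLE k (Submodule Rᵐᵒᵖ M)

/-- `c` is a regular element of `R` (neither a left nor a right zero divisor). -/
def regElem (R : Type*) [Ring R] (c : R) : Prop :=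
  (∀ x : R, c * x = 0 → x = 0) ∧ (∀ x : R, x * c = 0 → x = 0)

/-- `C_m = {c ∈ R | Kdim(R/cR) < m}` (for `0 < m`, `Kdim < m` is `Kdim ≤ m-1`). -/
def rCm (R : Type*) [Ring R] (m : ℕ) : Set R :=
  {c | kdimLE R (R ⧸ Submodule.span Rᵐᵒᵖ ({c} : Set R)) (m - 1)}

/-- The m-Gabriel filter `g = {right ideals I | Kdim(R/I) < m}`. -/
def gFilt (R : Type*) [Ring R] (m : ℕ) : Set (Submodule Rᵐᵒᵖ R) :=
  {I | kdimLE R (R ⧸ I) (m - 1)}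

/-- A right ideal `P` is a (two-sided) prime ideal of `R`. -/
def isTwoSidedPrime (R : Type*) [Ring R] (P : Submodule Rᵐᵒᵖ R) : Prop :=
  (∀ a ∈ P, ∀ r : R, r * a ∈ P) ∧ P ≠ ⊤ ∧
    ∀ a b : R, (∀ r : R, a * r * b ∈ P) → a ∈ P ∨ b ∈ P

/-- `c ∈ C(P)` : `c` is regular modulo `P`. -/
def regModP (R : Type*) [Ring R] (P : Submodule Rᵐᵒᵖ R) (c : R) : Prop :=
  ∀ x : R, (c * x ∈ P → x ∈ P) ∧ (x * c ∈ P → x ∈ P)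

/-- `X_m` : the set of (two-sided) prime ideals `P` with `Kdim(R/P) = m`. -/
def xSet (R : Type*) [Ring R] (m : ℕ) : Set (Submodule Rᵐᵒᵖ R) :=
  {P | isTwoSidedPrime R P ∧ kdimLE R (R ⧸ P) m ∧ ¬ kdimLE R (R ⧸ P) (m - 1)}

/-- `V_m = ⋂_{P ∈ X_m} C(P)`. -/
def vSet (R : Type*) [Ring R] (m : ℕ) : Set R :=
  {v | ∀ P ∈ xSet R m, regModP R P v}

/-- Left multiplication by `a` as a right-module (`Rᵐᵒᵖ`-module) endomorphism of `R`. -/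
def lmulHom (R : Type*) [Ring R] (a : R) : R →ₗ[Rᵐᵒᵖ] R where
  toFun x := a * x
  map_add' x y := mul_add a x y
  map_smul' r x := by
    simp [MulOpposite.smul_eq_mul_unop, mul_assoc]

/-- `Q` is a classical right quotient ring of `R` via `f : R →+* Q` :
`f` is injective, regular elements of `R` become units in `Q`, and every
element of `Q` is a right fraction `f a * (f s)⁻¹`. -/
def isRightQuotientRing (R Q : Type*) [Ring R] [Ring Q] (f : R →+* Q) : Prop :=
  Function.Injective f ∧ (∀ s : R, regElem R s → IsUnit (f s)) ∧
    ∀ q : Q, ∃ a s : R, regElem R s ∧ q * f s = f a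

/-- `R^e = {q ∈ Q | qJ ⊆ R for some J in the m-Gabriel filter}`, as a subset of `Q`. -/
def reSet (R Q : Type*) [Ring R] [Ring Q] (f : R →+* Q) (m : ℕ) : Set Q :=
  {q | ∃ J ∈ gFilt R m, ∀ j ∈ J, ∃ r : R, q * f j = f r}

/-- The extension `A·R^e` of a set `A ⊆ R` : the additive subgroup of `Q`
generated by products `f a * q` with `a ∈ A`, `q ∈ R^e` (a right ideal of `R^e`). -/
def extSet (R Q : Type*) [Ring R] [Ring Q] (f : R →+* Q) (m : ℕ) (A : Set R) : Set Q :=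
  (AddSubgroup.closure {x : Q | ∃ a ∈ A, ∃ q ∈ reSet R Q f m, x = f a * q} : Set Q)

/-- The right `R`-module structure on `Q` induced by `f : R →+* Q`. -/
def qMod (R Q : Type*) [Ring R] [Ring Q] (f : R →+* Q) : Module Rᵐᵒᵖ Q :=
  Module.compHom Q (RingHom.op f)


section auxdev
section devlemmas

lemma devLE_of_map : ∀ (k : ℕ) {A B : Type*} [Preorder A] [Preorder B] (g : A → B),
    (∀ x y : A, x ≤ y → g x ≤ g y) → (∀ x y : A, x ≤ y → g x = g y → x = y) →
    devLE k B → devLE k A := by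
  intro k
  induction k with
  | zero =>
    intro A B _ _ g hmono hinj hB f hf
    obtain ⟨N, hN⟩ := hB (g ∘ f) (fun i j hij => hmono _ _ (hf hij))
    exact ⟨N, fun i hi => hinj _ _ (hf (Nat.le_succ i)) (hN i hi)⟩
  | succ k ih =>
    intro A B _ _ g hmono hinj hB f hf
    obtain ⟨N, hN⟩ := hB (g ∘ f) (fun i j hij => hmono _ _ (hf hij))
    refine ⟨N, fun i hi => ?_⟩
    have hle : f (i+1) ≤ f i := hf (Nat.le_succ i)
    refine ih (fun x : Set.Icc (f (i+1)) (f i) =>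
      (⟨g x.1, hmono _ _ x.2.1, hmono _ _ x.2.2⟩ : Set.Icc (g (f (i+1))) (g (f i))))
      ?_ ?_ (hN i hi)
    · intro x y hxy
      exact hmono _ _ hxy
    · intro x y hxy hgxy
      exact Subtype.ext (hinj _ _ hxy (congrArg Subtype.val hgxy))

lemma devLE_of_subsingleton : ∀ (k : ℕ) (A : Type*) [Preorder A] [Subsingleton A],
    devLE k A := by
  intro k
  induction k with
  | zero => exact fun A _ _ f _ => ⟨0, fun i _ => Subsingleton.elim _ _⟩
  | succ k ih => exact fun A _ _ f _ => ⟨0, fun i _ => ih _⟩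

lemma devLE_succ {A : Type*} [Preorder A] (k : ℕ) (h : devLE k A) : devLE (k+1) A := by
  intro f hf
  refine ⟨0, fun i _ => ?_⟩
  exact devLE_of_map k (fun x : Set.Icc (f (i+1)) (f i) => x.1)
    (fun x y hxy => hxy) (fun x y _ e => Subtype.ext e) h

lemma devLE_mono {A : Type*} [Preorder A] {k k' : ℕ} (hk : k ≤ k') (h : devLE k A) :
    devLE k' A := by
  induction k' with
  | zero => exact Nat.le_zero.mp hk ▸ h
  | succ k' ih =>
    rcases Nat.lt_or_ge k (k'+1) with h1 | h1
    · exact devLE_succ k' (ih (Nat.lt_succ_iff.mp h1))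
    · exact Nat.le_antisymm hk h1 ▸ h

lemma devLE_prod : ∀ (k : ℕ) {A B : Type*} [Preorder A] [Preorder B],
    devLE k A → devLE k B → devLE k (A × B) := by
  intro k
  induction k with
  | zero =>
    intro A B _ _ hA hB f hf
    obtain ⟨N₁, h₁⟩ := hA (fun i => (f i).1) (fun i j hij => (hf hij).1)
    obtain ⟨N₂, h₂⟩ := hB (fun i => (f i).2) (fun i j hij => (hf hij).2)
    exact ⟨max N₁ N₂, fun i hi =>
      Prod.ext (h₁ i (le_trans (le_max_left _ _) hi)) (h₂ i (le_trans (le_max_right _ _) hi))⟩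
  | succ k ih =>
    intro A B _ _ hA hB f hf
    obtain ⟨N₁, h₁⟩ := hA (fun i => (f i).1) (fun i j hij => (hf hij).1)
    obtain ⟨N₂, h₂⟩ := hB (fun i => (f i).2) (fun i j hij => (hf hij).2)
    refine ⟨max N₁ N₂, fun i hi => ?_⟩
    have d1 := h₁ i (le_trans (le_max_left _ _) hi)
    have d2 := h₂ i (le_trans (le_max_right _ _) hi)
    refine devLE_of_map k
      (fun x : Set.Icc (f (i+1)) (f i) =>
        ((⟨x.1.1, x.2.1.1, x.2.2.1⟩, ⟨x.1.2, x.2.1.2, x.2.2.2⟩) :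
          Set.Icc (f (i+1)).1 (f i).1 × Set.Icc (f (i+1)).2 (f i).2))
      ?_ ?_ (ih d1 d2)
    · intro x y hxy; exact ⟨hxy.1, hxy.2⟩
    · intro x y _ e
      refine Subtype.ext (Prod.ext ?_ ?_)
      · exact congrArg Subtype.val (congrArg Prod.fst e)
      · exact congrArg Subtype.val (congrArg Prod.snd e)

end devlemmas

section moduleLemmas

variable {S : Type*} [Ring S] {M M₂ : Type*} [AddCommGroup M] [Module S M]
  [AddCommGroup M₂] [Module S M₂]

lemma devLE_of_linear_inj (k : ℕ) (φ : M →ₗ[S] M₂) (hφ : Function.Injective φ)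
    (h : devLE k (Submodule S M₂)) : devLE k (Submodule S M) :=
  devLE_of_map k (Submodule.map φ) (fun _ _ hxy => Submodule.map_mono hxy)
    (fun _ _ _ e => Submodule.map_injective_of_injective hφ e) h

lemma devLE_of_linear_surj (k : ℕ) (φ : M →ₗ[S] M₂) (hφ : Function.Surjective φ)
    (h : devLE k (Submodule S M)) : devLE k (Submodule S M₂) :=
  devLE_of_map k (Submodule.comap φ) (fun _ _ hxy => Submodule.comap_mono hxy)
    (fun _ _ _ e => Submodule.comap_injective_of_surjective hφ e) h

lemma devLE_subquot (k : ℕ) (N : Submodule S M)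
    (h1 : devLE k (Submodule S N)) (h2 : devLE k (Submodule S (M ⧸ N))) :
    devLE k (Submodule S M) := by
  refine devLE_of_map k
    (fun C : Submodule S M => ((Submodule.comap N.subtype C, Submodule.map N.mkQ C) :
      Submodule S N × Submodule S (M ⧸ N))) ?_ ?_ (devLE_prod k h1 h2)
  · intro x y hxy
    exact ⟨Submodule.comap_mono hxy, Submodule.map_mono hxy⟩
  · intro C D hCD e
    have e1 : Submodule.comap N.subtype C = Submodule.comap N.subtype D :=
      congrArg Prod.fst e
    have e2 : Submodule.map N.mkQ C = Submodule.map N.mkQ D := congrArg Prod.snd e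
    have h1' : N ⊓ C = N ⊓ D := by
      rw [← Submodule.map_comap_subtype, ← Submodule.map_comap_subtype, e1]
    have h2' : N ⊔ C = N ⊔ D := by
      have := congrArg (Submodule.comap N.mkQ) e2
      rwa [Submodule.comap_map_mkQ, Submodule.comap_map_mkQ, sup_comm N C, sup_comm N D,
        ← sup_comm N C, ← sup_comm N D] at this
    have key : C ⊔ (N ⊓ D) = (C ⊔ N) ⊓ D := (sup_inf_assoc_of_le N hCD).symm
    have : C = D := by
      have hr : (C ⊔ N) ⊓ D = D := by
        rw [sup_comm C N, h2', ← sup_comm D N]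
        exact inf_eq_right.mpr le_sup_left
      have hl : C ⊔ (N ⊓ D) = C := by
        rw [← h1']
        exact sup_eq_left.mpr inf_le_right
      rw [← hl, key, hr]
    exact this

lemma devLE_prodMod (k : ℕ) (h1 : devLE k (Submodule S M)) (h2 : devLE k (Submodule S M₂)) :
    devLE k (Submodule S (M × M₂)) := by
  set N : Submodule S (M × M₂) := LinearMap.ker (LinearMap.fst S M M₂) with hN
  have hsub : devLE k (Submodule S N) := by
    refine devLE_of_linear_inj k ((LinearMap.snd S M M₂).comp N.subtype) ?_ h2
    intro x y exy
    ext
    · have hx := x.2; have hy := y.2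
      simp only [hN, LinearMap.mem_ker, LinearMap.fst_apply] at hx hy
      rw [hx, hy]
    · exact exy
  have hquot : devLE k (Submodule S ((M × M₂) ⧸ N)) := by
    refine devLE_of_linear_surj k (N.mkQ.comp (LinearMap.inl S M M₂)) ?_ h1
    intro q
    obtain ⟨⟨a, b⟩, rfl⟩ := N.mkQ_surjective q
    refine ⟨a, ?_⟩
    simp only [LinearMap.comp_apply, LinearMap.inl_apply]
    rw [Submodule.mkQ_apply, Submodule.mkQ_apply, Submodule.Quotient.eq]
    simp [hN]
  exact devLE_subquot k N hsub hquot

lemma devLE_pi (k : ℕ) : ∀ (j : ℕ) (V : Fin j → Type*)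
    [∀ i, AddCommGroup (V i)] [∀ i, Module S (V i)],
    (∀ i, devLE k (Submodule S (V i))) → devLE k (Submodule S (∀ i, V i)) := by
  intro j
  induction j with
  | zero =>
    intro V _ _ _
    have : Subsingleton (∀ i : Fin 0, V i) := ⟨fun a b => funext (fun i => Fin.elim0 i)⟩
    have : Subsingleton (Submodule S (∀ i : Fin 0, V i)) := by
      constructor
      intro a b
      ext x
      rw [Subsingleton.elim x 0]
      simp
    exact devLE_of_subsingleton k _
  | succ j ih =>
    intro V _ _ hV
    have htail := ih (fun i => V i.succ) (fun i => hV i.succ)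
    have hprod := devLE_prodMod k (hV 0) htail
    refine devLE_of_linear_inj k
      (LinearMap.prod (LinearMap.proj 0) (LinearMap.pi (fun i => LinearMap.proj i.succ))) ?_ hprod
    intro x y e
    have e1 : x 0 = y 0 := congrArg Prod.fst e
    have e2 : ∀ i : Fin j, x i.succ = y i.succ := fun i =>
      congrFun (congrArg Prod.snd e) i
    funext i
    rcases Fin.eq_zero_or_eq_succ i with h | ⟨i', rfl⟩
    · rw [h]; exact e1
    · exact e2 i'

end moduleLemmas

section ringlemmas

variable {R : Type} [Ring R]

lemma rmul_mem {J : Submodule Rᵐᵒᵖ R} {x : R} (hx : x ∈ J) (s : R) : x * s ∈ J := by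
  have : x * s = (MulOpposite.op s) • x := by
    simp [MulOpposite.smul_eq_mul_unop]
  rw [this]
  exact J.smul_mem _ hx

lemma lmulHom_apply2 (a x : R) : lmulHom R a x = a * x := rfl

lemma mem_span_single {c x : R} : x ∈ Submodule.span Rᵐᵒᵖ ({c} : Set R) ↔ ∃ r : R, c * r = x := by
  rw [Submodule.mem_span_singleton]
  constructor
  · rintro ⟨a, rfl⟩
    exact ⟨a.unop, by simp [MulOpposite.smul_eq_mul_unop]⟩
  · rintro ⟨r, rfl⟩
    exact ⟨MulOpposite.op r, by simp [MulOpposite.smul_eq_mul_unop]⟩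

variable [IsNoetherian Rᵐᵒᵖ R]
variable (hprime : ∀ a b : R, (∀ r : R, a * r * b = 0) → a = 0 ∨ b = 0)

include hprime in
lemma nil_ideal_eq_bot (J : Submodule Rᵐᵒᵖ R)
    (hnil : ∀ x ∈ J, ∃ p : ℕ, 0 < p ∧ x ^ p = 0) : J = ⊥ := by
  by_contra hJ
  obtain ⟨a0, ha0J, ha0⟩ := Submodule.exists_mem_ne_zero_of_ne_bot hJ
  set 𝒮 : Set (Submodule Rᵐᵒᵖ R) :=
    {K | ∃ x, x ∈ J ∧ x ≠ 0 ∧ K = LinearMap.ker (lmulHom R x)} with h𝒮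
  obtain ⟨K, hK𝒮, hKmax⟩ := (set_has_maximal_iff_noetherian.mpr inferInstance) 𝒮
    ⟨_, a0, ha0J, ha0, rfl⟩
  obtain ⟨a, haJ, ha, rfl⟩ := hK𝒮
  have key : ∀ s : R, a * s * a = 0 := by
    intro s
    by_contra hasa
    have has : a * s ≠ 0 := by
      intro h; exact hasa (by rw [h, zero_mul])
    have hasJ : a * s ∈ J := rmul_mem haJ s
    obtain ⟨p, hp, hpow⟩ := hnil _ hasJ
    classical
    have hex : ∃ q, (a*s) ^ q = 0 := ⟨p, hpow⟩
    set k := Nat.find hex with hk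
    have hk0 : (a*s) ^ k = 0 := Nat.find_spec hex
    have hklt : ∀ q < k, (a*s) ^ q ≠ 0 := fun q hq => Nat.find_min hex hq
    have hk2 : 2 ≤ k := by
      by_contra hlt
      push_neg at hlt
      interval_cases k
      · have : (1 : R) = 0 := by simpa using hk0
        exact ha (by rw [← mul_one a, this, mul_zero])
      · exact has (by simpa using hk0)
    -- powers of (a*s) with exponent ≥ 1 are in J
    have hpowJ : ∀ j, 1 ≤ j → (a*s)^j ∈ J := by
      intro j hj
      obtain ⟨j', rfl⟩ := Nat.exists_eq_add_of_le hj
      rw [add_comm, pow_succ']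
      exact rmul_mem hasJ _
    -- the descent step
    have step : ∀ j, 1 ≤ j → (a*s)^(j+1) * a = 0 → (a*s)^j * a = 0 := by
      intro j hj hnext
      by_contra hv
      set v := (a*s)^j * a with hvdef
      have hvJ : v ∈ J := rmul_mem (hpowJ j hj) a
      have hle : LinearMap.ker (lmulHom R a) ≤ LinearMap.ker (lmulHom R v) := by
        intro y hy
        simp only [LinearMap.mem_ker, lmulHom_apply2] at hy ⊢
        rw [hvdef, mul_assoc, hy, mul_zero]
      have heq : LinearMap.ker (lmulHom R a) = LinearMap.ker (lmulHom R v) := by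
        by_contra hne
        exact hKmax _ ⟨v, hvJ, hv, rfl⟩ (lt_of_le_of_ne hle hne)
      have hvsa : v * (s * a) = 0 := by
        rw [hvdef]
        have : (a*s)^j * a * (s * a) = (a*s)^(j+1) * a := by
          rw [pow_succ]
          simp only [mul_assoc]
        rw [this, hnext]
      have : s * a ∈ LinearMap.ker (lmulHom R v) := by
        simp only [LinearMap.mem_ker, lmulHom_apply2]
        exact hvsa
      rw [← heq] at this
      simp only [LinearMap.mem_ker, lmulHom_apply2] at this
      exact hasa (by rw [← mul_assoc] at this; exact this)
    have down : ∀ d, d ≤ k - 1 → (a*s)^(k - d) * a = 0 := by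
      intro d
      induction d with
      | zero =>
        intro _
        simp only [Nat.sub_zero]
        rw [hk0, zero_mul]
      | succ d ih =>
        intro hd
        have hd' : d ≤ k - 1 := Nat.le_of_succ_le hd
        have h1 : 1 ≤ k - (d+1) := by omega
        have h2 : k - (d+1) + 1 = k - d := by omega
        exact step _ h1 (by rw [h2]; exact ih hd')
    have final := down (k-1) (le_refl _)
    have : k - (k-1) = 1 := by omega
    rw [this, pow_one] at final
    exact hasa final
  rcases hprime a a key with h | h <;> exact ha h

include hprime in
lemma exists_fitting (J : Submodule Rᵐᵒᵖ R) (hJ : J ≠ ⊥) :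
    ∃ b, b ∈ J ∧ b ≠ 0 ∧ ∀ u : R, b * (b * u) = 0 → b * u = 0 := by
  have hnn : ∃ x, x ∈ J ∧ ∀ p : ℕ, 0 < p → x ^ p ≠ 0 := by
    by_contra h
    push_neg at h
    apply hJ
    apply nil_ideal_eq_bot hprime
    intro x hx
    obtain ⟨p, hp, hpow⟩ := h x hx
    exact ⟨p, hp, hpow⟩
  obtain ⟨x, hxJ, hxnn⟩ := hnn
  set ch : ℕ →o Submodule Rᵐᵒᵖ R :=
    ⟨fun j => LinearMap.ker (lmulHom R (x^j)), by
      intro i j hij y hy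
      simp only [LinearMap.mem_ker, lmulHom_apply2] at hy ⊢
      obtain ⟨d, rfl⟩ := Nat.exists_eq_add_of_le hij
      rw [add_comm, pow_add, mul_assoc, hy, mul_zero]⟩ with hch
  obtain ⟨N₀, hN₀⟩ := (monotone_stabilizes_iff_noetherian.mpr inferInstance) ch
  set p := N₀ + 1 with hp
  refine ⟨x^p, ?_, hxnn p (Nat.succ_pos _), ?_⟩
  · rw [hp, pow_succ']
    exact rmul_mem hxJ _
  · intro u hu
    have h2p : x^p * (x^p * u) = x^(p+p) * u := by
      rw [← mul_assoc, ← pow_add]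
    rw [h2p] at hu
    have hu' : u ∈ ch (p+p) := by
      simp only [hch, LinearMap.mem_ker, lmulHom_apply2, OrderHom.coe_mk]
      exact hu
    have e1 : ch N₀ = ch (p+p) := hN₀ _ (by omega)
    have e2 : ch N₀ = ch p := hN₀ _ (by omega)
    rw [← e1, e2] at hu'
    exact hu'

end ringlemmas


section genmod

variable {S : Type*} [Ring S] {M : Type*} [AddCommGroup M] [Module S M]

lemma devLE_of_subsingleton_mod (k : ℕ) [Subsingleton M] : devLE k (Submodule S M) := by
  have : Subsingleton (Submodule S M) := by
    constructor
    intro a b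
    ext x
    rw [Subsingleton.elim x 0]
    simp
  exact devLE_of_subsingleton k _

lemma devLE_of_le (k : ℕ) {A B : Submodule S M} (hAB : A ≤ B)
    (h : devLE k (Submodule S B)) : devLE k (Submodule S A) :=
  devLE_of_linear_inj k (Submodule.inclusion hAB) (Submodule.inclusion_injective hAB) h

lemma devLE_sup (k : ℕ) {A B : Submodule S M}
    (hA : devLE k (Submodule S A)) (hB : devLE k (Submodule S B)) :
    devLE k (Submodule S ↥(A ⊔ B)) := by
  have hsub : devLE k (Submodule S
      (Submodule.comap (A ⊔ B).subtype A : Submodule S ↥(A ⊔ B))) := by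
    refine devLE_of_linear_inj k
      (LinearMap.codRestrict A ((A ⊔ B).subtype.comp
        (Submodule.comap (A ⊔ B).subtype A).subtype) (fun x => x.2)) ?_ hA
    intro x y e
    have h1 := congrArg Subtype.val e
    exact Subtype.ext (Subtype.ext h1)
  have hquot : devLE k (Submodule S
      (↥(A ⊔ B) ⧸ (Submodule.comap (A ⊔ B).subtype A : Submodule S ↥(A ⊔ B)))) := by
    refine devLE_of_linear_surj k
      ((Submodule.comap (A ⊔ B).subtype A).mkQ.comp
        (Submodule.inclusion (le_sup_right : B ≤ A ⊔ B))) ?_ hB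
    intro q
    obtain ⟨w, rfl⟩ := (Submodule.comap (A ⊔ B).subtype A).mkQ_surjective q
    obtain ⟨a, ha, b, hb, hab⟩ := Submodule.mem_sup.mp w.2
    refine ⟨⟨b, hb⟩, ?_⟩
    simp only [LinearMap.comp_apply, Submodule.mkQ_apply]
    rw [Submodule.Quotient.eq]
    refine Submodule.mem_comap.mpr ?_
    have hval : ((A ⊔ B).subtype ((Submodule.inclusion (le_sup_right : B ≤ A ⊔ B)) ⟨b, hb⟩ - w))
        = b - (w : M) := rfl
    rw [hval, ← hab]
    simpa using (A.neg_mem ha)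
  exact devLE_subquot k _ hsub hquot

lemma devLE_finset_sup (k : ℕ) {ι : Type*} (s : Finset ι) (V : ι → Submodule S M)
    (h : ∀ i, devLE k (Submodule S (V i))) : devLE k (Submodule S ↥(s.sup V)) := by
  classical
  induction s using Finset.induction with
  | empty =>
    rw [Finset.sup_empty]
    have : Subsingleton (⊥ : Submodule S M) := by
      constructor
      rintro ⟨x, hx⟩ ⟨y, hy⟩
      simp only [Submodule.mem_bot] at hx hy
      subst hx; subst hy; rfl
    exact devLE_of_subsingleton_mod k
  | insert a s hnotmem ih =>
    rw [Finset.sup_insert]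
    exact devLE_sup k (h _) ih

end genmod

section mainml

variable {R : Type} [Ring R] [IsNoetherian Rᵐᵒᵖ R]
variable (hprime : ∀ a b : R, (∀ r : R, a * r * b = 0) → a = 0 ∨ b = 0)

/-- deviation of the image of a submodule under left multiplication -/
lemma devLE_map_lmul (k : ℕ) (I : Submodule Rᵐᵒᵖ R) (r : R)
    (hI : devLE k (Submodule Rᵐᵒᵖ I)) :
    devLE k (Submodule Rᵐᵒᵖ (Submodule.map (lmulHom R r) I)) := by
  set ψ : I →ₗ[Rᵐᵒᵖ] R := (lmulHom R r).comp I.subtype with hψ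
  have hrange : LinearMap.range ψ = Submodule.map (lmulHom R r) I := by
    rw [hψ, LinearMap.range_comp, Submodule.range_subtype]
  rw [← hrange]
  exact devLE_of_linear_surj k ψ.rangeRestrict (LinearMap.surjective_rangeRestrict ψ) hI

include hprime in
theorem ML (k : ℕ) (I : Submodule Rᵐᵒᵖ R) (hI : I ≠ ⊥)
    (hkI : devLE k (Submodule Rᵐᵒᵖ I)) : devLE k (Submodule Rᵐᵒᵖ R) := by
  classical
  set T : Submodule Rᵐᵒᵖ R := ⨆ r : R, Submodule.map (lmulHom R r) I with hT
  have hIT : I ≤ T := by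
    have h1 : Submodule.map (lmulHom R 1) I = I := by
      have : lmulHom R (1 : R) = LinearMap.id := by
        ext x; simp [lmulHom_apply2]
      rw [this, Submodule.map_id]
    have h2 := le_iSup (fun r : R => Submodule.map (lmulHom R r) I) 1
    rw [h1] at h2
    exact h2
  have hT0 : T ≠ ⊥ := by
    intro h
    exact hI (le_bot_iff.mp (h ▸ hIT))
  have hTleft : ∀ s x : R, x ∈ T → s * x ∈ T := by
    intro s x hx
    have : T ≤ Submodule.comap (lmulHom R s) T := by
      rw [hT]
      refine iSup_le (fun r => ?_)
      rintro y ⟨z, hz, rfl⟩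
      refine Submodule.mem_comap.mpr ?_
      have : lmulHom R s (lmulHom R r z) = lmulHom R (s * r) z := by
        simp [lmulHom_apply2, mul_assoc]
      rw [this]
      exact le_iSup (fun r : R => Submodule.map (lmulHom R r) I) (s*r) ⟨z, hz, rfl⟩
    exact this hx
  have hTess : ∀ D : Submodule Rᵐᵒᵖ R, D ≠ ⊥ → T ⊓ D ≠ ⊥ := by
    intro D hD
    obtain ⟨d, hdD, hd⟩ := Submodule.exists_mem_ne_zero_of_ne_bot hD
    obtain ⟨x, hxI, hx⟩ := Submodule.exists_mem_ne_zero_of_ne_bot hI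
    have : ¬ (∀ r : R, d * r * x = 0) := by
      intro hall
      rcases hprime d x hall with h | h
      · exact hd h
      · exact hx h
    push_neg at this
    obtain ⟨r, hr⟩ := this
    intro hbot
    have hmem : d * r * x ∈ T ⊓ D := by
      constructor
      · rw [mul_assoc]
        exact hTleft d (r * x) (hTleft r x (hIT hxI))
      · rw [mul_assoc]
        exact rmul_mem hdD (r * x)
    rw [hbot] at hmem
    exact hr (Submodule.mem_bot _ |>.mp hmem)
  -- T has deviation ≤ k
  have hTk : devLE k (Submodule Rᵐᵒᵖ T) := by
    obtain ⟨g, hg⟩ := (IsNoetherian.noetherian T : T.FG)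
    have hmem : ∀ y ∈ (g : Set R), ∃ s : Finset R,
        y ∈ ⨆ r ∈ s, Submodule.map (lmulHom R r) I := by
      intro y hy
      have : y ∈ T := by
        rw [← hg]
        exact Submodule.subset_span hy
      rw [hT] at this
      exact (Submodule.mem_iSup_iff_exists_finset).mp this
    choose F hF using hmem
    set SS : Finset R := g.attach.biUnion (fun y => F y.1 y.2) with hSS
    have hle : T ≤ SS.sup (fun r => Submodule.map (lmulHom R r) I) := by
      rw [← hg, Submodule.span_le]
      intro y hy
      have h1 := hF y hy
      have h2 : (⨆ r ∈ F y hy, Submodule.map (lmulHom R r) I) ≤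
          SS.sup (fun r => Submodule.map (lmulHom R r) I) := by
        refine iSup_le (fun r => iSup_le (fun hr => ?_))
        have hmemSS : r ∈ SS := Finset.mem_biUnion.mpr ⟨⟨y, hy⟩, Finset.mem_attach _ _, hr⟩
        exact Finset.le_sup (f := fun r => Submodule.map (lmulHom R r) I) hmemSS
      exact h2 h1
    refine devLE_of_le k hle ?_
    exact devLE_finset_sup k SS _ (fun r => devLE_map_lmul k I r hkI)
  -- staircase construction
  set Good : List R → Prop := fun l =>
    (∀ a ∈ l, a ∈ T ∧ a ≠ 0 ∧ (∀ u : R, a * (a * u) = 0 → a * u = 0)) ∧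
      l.Pairwise (fun a b => a * b = 0) with hGood
  set D : List R → Submodule Rᵐᵒᵖ R := fun l => ⨅ a ∈ l, LinearMap.ker (lmulHom R a) with hD
  set 𝒜 : Set (Submodule Rᵐᵒᵖ R) :=
    {W | ∃ l : List R, Good l ∧ W = Submodule.span Rᵐᵒᵖ {x | x ∈ l}} with h𝒜
  have h𝒜ne : 𝒜.Nonempty := by
    refine ⟨⊥, [], ⟨by simp, List.Pairwise.nil⟩, ?_⟩
    simp
  obtain ⟨S₀, hS₀mem, hS₀max⟩ := (set_has_maximal_iff_noetherian.mpr inferInstance) 𝒜 h𝒜ne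
  obtain ⟨l₀, hGood₀, rfl⟩ := hS₀mem
  have hDbot : D l₀ = ⊥ := by
    by_contra hDne
    obtain ⟨b, hbJ, hb0, hbfit⟩ := exists_fitting hprime (T ⊓ D l₀) (hTess _ hDne)
    have hbT : b ∈ T := hbJ.1
    have hbD : b ∈ D l₀ := hbJ.2
    have hbker : ∀ a ∈ l₀, a * b = 0 := by
      intro a ha
      have : b ∈ LinearMap.ker (lmulHom R a) := by
        have := hbD
        rw [hD] at this
        simp only [Submodule.mem_iInf] at this
        exact this a ha
      simpa [LinearMap.mem_ker, lmulHom_apply2] using this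
    -- b is not in the span of l₀
    have hbnotin : b ∉ Submodule.span Rᵐᵒᵖ {x | x ∈ l₀} := by
      intro hbin
      have hrange : {x | x ∈ l₀} = Set.range l₀.get := by
        ext x
        simp only [Set.mem_setOf_eq, Set.mem_range]
        exact ⟨fun h => by obtain ⟨i, hi⟩ := List.mem_iff_get.mp h; exact ⟨i, hi⟩,
          fun ⟨i, hi⟩ => hi ▸ List.get_mem _ _⟩
      rw [hrange] at hbin
      obtain ⟨v, hv⟩ := (Submodule.mem_span_range_iff_exists_fun Rᵐᵒᵖ).mp hbin
      have hterm : ∀ i, v i • l₀.get i = l₀.get i * (v i).unop := by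
        intro i
        simp [MulOpposite.smul_eq_mul_unop]
      set w : Fin l₀.length → R := fun i => (v i).unop with hw
      set s : Finset (Fin l₀.length) :=
        Finset.univ.filter (fun i => l₀.get i * w i ≠ 0) with hs
      rcases s.eq_empty_or_nonempty with hse | hsne
      · apply hb0
        rw [← hv]
        refine Finset.sum_eq_zero (fun i _ => ?_)
        rw [hterm i]
        by_contra hne
        have : i ∈ s := by
          rw [hs]
          exact Finset.mem_filter.mpr ⟨Finset.mem_univ _, hne⟩
        rw [hse] at this
        exact absurd this (Finset.notMem_empty i)
      · set i₀ := s.min' hsne with hi₀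
        have hi₀s : i₀ ∈ s := s.min'_mem hsne
        have hi₀ne : l₀.get i₀ * w i₀ ≠ 0 := (Finset.mem_filter.mp hi₀s).2
        set a₀ := l₀.get i₀ with ha₀
        have hzero : a₀ * b = 0 := hbker a₀ (List.get_mem _ _)
        have hsum : a₀ * b = a₀ * (a₀ * w i₀) := by
          rw [← hv, Finset.mul_sum]
          rw [Finset.sum_eq_single i₀]
          · rw [hterm i₀]
          · intro i _ hii₀
            rw [hterm i]
            rcases lt_or_gt_of_ne hii₀ with hlt | hgt
            · have : i ∉ s := fun hmem => absurd (s.min'_le i hmem) (not_le.mpr hlt)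
              have hzero' : l₀.get i * w i = 0 := by
                by_contra hne
                exact this (Finset.mem_filter.mpr ⟨Finset.mem_univ _, hne⟩)
              rw [hzero', mul_zero]
            · have hpair : a₀ * l₀.get i = 0 := by
                have := List.pairwise_iff_get.mp hGood₀.2 i₀ i hgt
                exact this
              rw [← mul_assoc, hpair, zero_mul]
          · intro hni₀
            exact absurd (Finset.mem_univ i₀) hni₀
        have : a₀ * w i₀ = 0 := by
          have ha₀fit := (hGood₀.1 a₀ (List.get_mem _ _)).2.2
          exact ha₀fit _ (by rw [← hsum, hzero])
        exact hi₀ne this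
    -- extend the list
    have hGoodext : Good (l₀ ++ [b]) := by
      constructor
      · intro a ha
        rcases List.mem_append.mp ha with h | h
        · exact hGood₀.1 a h
        · have : a = b := List.mem_singleton.mp h
          subst this
          exact ⟨hbT, hb0, hbfit⟩
      · rw [List.pairwise_append]
        refine ⟨hGood₀.2, List.pairwise_singleton _ _, ?_⟩
        intro a ha b' hb'
        have : b' = b := List.mem_singleton.mp hb'
        subst this
        exact hbker a ha
    have hspan : Submodule.span Rᵐᵒᵖ {x | x ∈ l₀} < Submodule.span Rᵐᵒᵖ {x | x ∈ l₀ ++ [b]} := by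
      constructor
      · apply Submodule.span_mono
        intro x hx
        simp only [Set.mem_setOf_eq, List.mem_append] at hx ⊢
        exact Or.inl hx
      · intro hle
        apply hbnotin
        apply hle
        apply Submodule.subset_span
        simp
    exact hS₀max _ ⟨l₀ ++ [b], hGoodext, rfl⟩ hspan
  -- now build the embedding
  set len := l₀.length with hlen
  set V : Fin len → Submodule Rᵐᵒᵖ R := fun i => Submodule.span Rᵐᵒᵖ {l₀.get i} with hV
  have hVk : ∀ i, devLE k (Submodule Rᵐᵒᵖ (V i)) := by
    intro i
    refine devLE_of_le k ?_ hTk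
    rw [hV]
    rw [Submodule.span_le]
    intro x hx
    rw [Set.mem_singleton_iff] at hx
    subst hx
    exact (hGood₀.1 _ (List.get_mem _ _)).1
  set φ : R →ₗ[Rᵐᵒᵖ] (∀ i : Fin len, V i) :=
    LinearMap.pi (fun i => LinearMap.codRestrict (V i) (lmulHom R (l₀.get i))
      (fun x => mem_span_single.mpr ⟨x, rfl⟩)) with hφ
  have hφinj : Function.Injective φ := by
    rw [← LinearMap.ker_eq_bot]
    rw [eq_bot_iff]
    intro x hx
    simp only [LinearMap.mem_ker] at hx
    have hcomp : ∀ i : Fin len, l₀.get i * x = 0 := by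
      intro i
      have := congrFun hx i
      have h2 : (LinearMap.codRestrict (V i) (lmulHom R (l₀.get i))
          (fun x => mem_span_single.mpr ⟨x, rfl⟩) x : R) = (0 : R) := by
        rw [show (LinearMap.codRestrict (V i) (lmulHom R (l₀.get i))
          (fun x => mem_span_single.mpr ⟨x, rfl⟩) x) = ((0 : ∀ i : Fin len, V i) i) from this]
        rfl
      simpa [lmulHom_apply2] using h2
    have : x ∈ D l₀ := by
      rw [hD]
      simp only [Submodule.mem_iInf]
      intro a ha
      obtain ⟨i, rfl⟩ := List.mem_iff_get.mp ha
      simp only [LinearMap.mem_ker, lmulHom_apply2]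
      exact hcomp i
    rw [hDbot] at this
    simpa using this
  exact devLE_of_linear_inj k φ hφinj (devLE_pi k len (fun i => V i) hVk)

end mainml

section powquot

variable {R : Type} [Ring R]

lemma devLE_quot_pow (c : R) (k : ℕ)
    (hc : devLE k (Submodule Rᵐᵒᵖ (R ⧸ Submodule.span Rᵐᵒᵖ ({c} : Set R)))) :
    ∀ j, 1 ≤ j → devLE k (Submodule Rᵐᵒᵖ (R ⧸ Submodule.span Rᵐᵒᵖ ({c^j} : Set R))) := by
  intro j hj
  induction j, hj using Nat.le_induction with
  | base =>
    rw [pow_one]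
    exact hc
  | succ j hj ih =>
    set Sc : Submodule Rᵐᵒᵖ R := Submodule.span Rᵐᵒᵖ ({c} : Set R) with hSc
    set S : Submodule Rᵐᵒᵖ R := Submodule.span Rᵐᵒᵖ ({c^(j+1)} : Set R) with hS
    have hker1 : Sc ≤ LinearMap.ker (S.mkQ.comp (lmulHom R (c^j))) := by
      rw [hSc, Submodule.span_le]
      intro y hy
      rw [Set.mem_singleton_iff] at hy
      subst hy
      simp only [SetLike.mem_coe, LinearMap.mem_ker, LinearMap.comp_apply, lmulHom_apply2,
        Submodule.mkQ_apply, Submodule.Quotient.mk_eq_zero]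
      rw [← pow_succ]
      exact Submodule.mem_span_singleton_self _
    set g₁ : (R ⧸ Sc) →ₗ[Rᵐᵒᵖ] (R ⧸ S) := Submodule.liftQ Sc _ hker1 with hg₁
    set N := LinearMap.range g₁ with hN
    have h1 : devLE k (Submodule Rᵐᵒᵖ N) :=
      devLE_of_linear_surj k g₁.rangeRestrict (LinearMap.surjective_rangeRestrict g₁) hc
    have hker2 : Submodule.span Rᵐᵒᵖ ({c^j} : Set R) ≤
        LinearMap.ker (N.mkQ.comp S.mkQ) := by
      rw [Submodule.span_le]
      intro y hy
      rw [Set.mem_singleton_iff] at hy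
      subst hy
      simp only [SetLike.mem_coe, LinearMap.mem_ker, LinearMap.comp_apply,
        Submodule.mkQ_apply, Submodule.Quotient.mk_eq_zero]
      refine ⟨Submodule.Quotient.mk (1 : R), ?_⟩
      rw [hg₁, Submodule.liftQ_apply]
      simp [lmulHom_apply2]
    set g₂ : (R ⧸ Submodule.span Rᵐᵒᵖ ({c^j} : Set R)) →ₗ[Rᵐᵒᵖ] ((R ⧸ S) ⧸ N) :=
      Submodule.liftQ _ _ hker2 with hg₂
    have hsurj : Function.Surjective g₂ := by
      intro q
      obtain ⟨y, rfl⟩ := N.mkQ_surjective q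
      obtain ⟨r, rfl⟩ := S.mkQ_surjective y
      refine ⟨Submodule.Quotient.mk r, ?_⟩
      rw [hg₂]
      rw [Submodule.liftQ_apply]
      rfl
    have h2 : devLE k (Submodule Rᵐᵒᵖ ((R ⧸ S) ⧸ N)) := devLE_of_linear_surj k g₂ hsurj ih
    exact devLE_subquot k N h1 h2

variable [IsNoetherian Rᵐᵒᵖ R]

lemma c_regular (hprime : ∀ a b : R, (∀ r : R, a * r * b = 0) → a = 0 ∨ b = 0) (c : R) (k : ℕ)
    (hc : devLE k (Submodule Rᵐᵒᵖ (R ⧸ Submodule.span Rᵐᵒᵖ ({c} : Set R))))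
    (hbig : ¬ devLE k (Submodule Rᵐᵒᵖ R)) : regElem R c := by
  have hpq := devLE_quot_pow c k hc
  constructor
  · -- left multiplication by c is injective
    intro x hx
    set ch : ℕ →o Submodule Rᵐᵒᵖ R :=
      ⟨fun j => LinearMap.ker (lmulHom R (c^j)), by
        intro i j hij y hy
        simp only [LinearMap.mem_ker, lmulHom_apply2] at hy ⊢
        obtain ⟨d, rfl⟩ := Nat.exists_eq_add_of_le hij
        rw [add_comm, pow_add, mul_assoc, hy, mul_zero]⟩ with hch
    obtain ⟨N₀, hN₀⟩ := (monotone_stabilizes_iff_noetherian.mpr inferInstance) ch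
    set N := N₀ + 1 with hNdef
    have hstab : ch N = ch (N+1) := by
      rw [← hN₀ N (by omega), ← hN₀ (N+1) (by omega)]
    have hint : LinearMap.ker (lmulHom R c) ⊓ Submodule.span Rᵐᵒᵖ ({c^N} : Set R) = ⊥ := by
      rw [eq_bot_iff]
      intro z hz
      obtain ⟨hz1, hz2⟩ := Submodule.mem_inf.mp hz
      obtain ⟨y, rfl⟩ := mem_span_single.mp hz2
      simp only [LinearMap.mem_ker, lmulHom_apply2] at hz1
      have hy1 : y ∈ LinearMap.ker (lmulHom R (c^(N+1))) := by
        simp only [LinearMap.mem_ker, lmulHom_apply2]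
        rw [pow_succ', mul_assoc]
        exact hz1
      have hy2 : y ∈ ch (N+1) := hy1
      rw [← hstab] at hy2
      have hy3 : y ∈ LinearMap.ker (lmulHom R (c^N)) := hy2
      simp only [LinearMap.mem_ker, lmulHom_apply2] at hy3
      rw [Submodule.mem_bot]
      exact hy3
    set φ : LinearMap.ker (lmulHom R c) →ₗ[Rᵐᵒᵖ] (R ⧸ Submodule.span Rᵐᵒᵖ ({c^N} : Set R)) :=
      (Submodule.span Rᵐᵒᵖ ({c^N} : Set R)).mkQ.comp (LinearMap.ker (lmulHom R c)).subtype
      with hφ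
    have hφinj : Function.Injective φ := by
      rw [← LinearMap.ker_eq_bot, eq_bot_iff]
      intro z hz
      simp only [hφ, LinearMap.mem_ker, LinearMap.comp_apply, Submodule.mkQ_apply,
        Submodule.Quotient.mk_eq_zero] at hz
      have : (z : R) ∈ LinearMap.ker (lmulHom R c) ⊓
          Submodule.span Rᵐᵒᵖ ({c^N} : Set R) := ⟨z.2, hz⟩
      rw [hint] at this
      simp only [Submodule.mem_bot] at this
      rw [Submodule.mem_bot]
      exact Subtype.ext this
    have hkk : devLE k (Submodule Rᵐᵒᵖ (LinearMap.ker (lmulHom R c))) :=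
      devLE_of_linear_inj k φ hφinj (hpq N (by omega))
    have : LinearMap.ker (lmulHom R c) = ⊥ := by
      by_contra hne
      exact hbig (ML hprime k _ hne hkk)
    have hxmem : x ∈ LinearMap.ker (lmulHom R c) := by
      simp only [LinearMap.mem_ker, lmulHom_apply2]
      exact hx
    rw [this] at hxmem
    simpa using hxmem
  · -- right multiplication by c is injective
    intro x hx
    by_contra hx0
    have hker : Submodule.span Rᵐᵒᵖ ({c} : Set R) ≤ LinearMap.ker (lmulHom R x) := by
      rw [Submodule.span_le]
      intro y hy
      rw [Set.mem_singleton_iff] at hy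
      subst hy
      simp only [SetLike.mem_coe, LinearMap.mem_ker, lmulHom_apply2]
      exact hx
    set g : (R ⧸ Submodule.span Rᵐᵒᵖ ({c} : Set R)) →ₗ[Rᵐᵒᵖ] R :=
      Submodule.liftQ _ (lmulHom R x) hker with hg
    have hrange : LinearMap.range g = LinearMap.range (lmulHom R x) := by
      rw [hg]
      exact Submodule.range_liftQ _ _ _
    have hrk : devLE k (Submodule Rᵐᵒᵖ (LinearMap.range (lmulHom R x))) := by
      rw [← hrange]
      exact devLE_of_linear_surj k g.rangeRestrict (LinearMap.surjective_rangeRestrict g) hc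
    have hrne : LinearMap.range (lmulHom R x) ≠ ⊥ := by
      intro hbot
      have : x ∈ LinearMap.range (lmulHom R x) := ⟨1, by simp [lmulHom_apply2]⟩
      rw [hbot] at this
      exact hx0 (by simpa using this)
    exact hbig (ML hprime k _ hrne hrk)

end powquot


end auxdev

set_option maxHeartbeats 1000000 in
theorem stmt11 (R : Type) [Ring R] [Nontrivial R] [IsNoetherian Rᵐᵒᵖ R]
    (hprime : ∀ a b : R, (∀ r : R, a * r * b = 0) → a = 0 ∨ b = 0)
    (n m : ℕ) (hm : 0 < m) (hmn : m < n)
    (hdim : kdimLE R R n ∧ ¬ kdimLE R R (n - 1))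
    (Q : Type) [Ring Q] (f : R →+* Q) (hQ : isRightQuotientRing R Q f) :
    ∀ c : R, (∃ q ∈ reSet R Q f m, f c * q = 1 ∧ q * f c = 1) ↔ c ∈ rCm R m := by
  intro c
  constructor
  · rintro ⟨q, ⟨J, hJg, hJq⟩, hcq, hqc⟩
    have hJle : J ≤ Submodule.span Rᵐᵒᵖ ({c} : Set R) := by
      intro j hj
      obtain ⟨r, hr⟩ := hJq j hj
      have hfj : f j = f (c * r) := by
        have h1 : f c * (q * f j) = f c * f r := by rw [hr]
        rw [← mul_assoc, hcq, one_mul] at h1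
        rw [h1, map_mul]
      have : j = c * r := hQ.1 hfj
      rw [this]
      exact mem_span_single.mpr ⟨r, rfl⟩
    have hJker : J ≤ LinearMap.ker (Submodule.span Rᵐᵒᵖ ({c} : Set R)).mkQ := by
      rw [Submodule.ker_mkQ]
      exact hJle
    set g : (R ⧸ J) →ₗ[Rᵐᵒᵖ] (R ⧸ Submodule.span Rᵐᵒᵖ ({c} : Set R)) :=
      Submodule.liftQ J (Submodule.span Rᵐᵒᵖ ({c} : Set R)).mkQ hJker with hg
    have hsurj : Function.Surjective g := by
      intro y
      obtain ⟨r, rfl⟩ := (Submodule.span Rᵐᵒᵖ ({c} : Set R)).mkQ_surjective y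
      exact ⟨J.mkQ r, by rw [hg, Submodule.mkQ_apply, Submodule.liftQ_apply]⟩
    exact devLE_of_linear_surj (m-1) g hsurj hJg
  · intro hcm
    have hbig : ¬ devLE (m-1) (Submodule Rᵐᵒᵖ R) := by
      intro h
      exact hdim.2 (devLE_mono (by omega) h)
    have hreg : regElem R c := c_regular hprime c (m-1) hcm hbig
    obtain ⟨u, hu⟩ := hQ.2.1 c hreg
    refine ⟨((u⁻¹ : Qˣ) : Q), ?_, ?_, ?_⟩
    · refine ⟨Submodule.span Rᵐᵒᵖ ({c} : Set R), hcm, ?_⟩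
      intro j hj
      obtain ⟨r, rfl⟩ := mem_span_single.mp hj
      refine ⟨r, ?_⟩
      rw [map_mul, ← mul_assoc, ← hu, Units.inv_mul, one_mul]
    · rw [← hu, Units.mul_inv]
    · rw [← hu, Units.inv_mul]
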